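/- Let d_0 ≥ 1 and let Ω ⊆ ℝ^{d_0} be open. Let V = ℝ^N with a symmetric bilinear form ⟨·,·⟩, let S be a nonempty finite set partitioned as S = S_1 ⊔ ⋯ ⊔ S_k, and let u_s ∈ V, ε_s ∈ {−1,+1}, ν_s ∈ ℝ satisfy ⟨u_s, u_{s'}⟩ = 0 for s, s' in different blocks and Σ_{s'} ⟨u_s, u_{s'}⟩ ε_{s'} ν_{s'}² = −1 for all s. Let H_s : Ω → (0,∞) be twice continuously differentiable harmonic functions (Σ_{μ=1}^{d_0} ∂_μ∂_μ H_s = 0 on Ω) with H_s = H_{s'} whenever s, s' lie in the same block. Define σ : Ω → V by σ = Σ_s ε_s ν_s² (ln H_s) u_s and Φ^s = ν_s / H_s. Then on Ω: (i) Σ_μ ∂_μ ( e^{−2⟨u_s, σ⟩} ∂_μ Φ^s ) = 0 for every s ∈ S; (ii) Σ_μ ∂_μ∂_μ σ + Σ_s ε_s e^{−2⟨u_s, σ⟩} |∇Φ^s|² u_s = 0 (as a V-valued identity); (iii) ⟨∂_μ σ, ∂_ν σ⟩ + Σ_s ε_s e^{−2⟨u_s, σ⟩} ∂_μ Φ^s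 ∂_ν Φ^s = 0 for all μ, ν ∈ {1,…,d_0}. -/

import Mathlib

open scoped BigOperators

/-- Partial derivative `∂_μ f` of a scalar field on `ℝ^{d_0}`. -/
noncomputable def pd {d0 : ℕ} (f : (Fin d0 → ℝ) → ℝ) (μ : Fin d0)
    (x : Fin d0 → ℝ) : ℝ :=
  fderiv ℝ f x (Pi.single μ 1)

/-- Partial derivative `∂_μ f` of a vector-valued field on `ℝ^{d_0}`. -/
noncomputable def pdV {d0 N : ℕ} (f : (Fin d0 → ℝ) → (Fin N → ℝ)) (μ : Fin d0)
    (x : Fin d0 → ℝ) : Fin N → ℝ :=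
  fderiv ℝ f x (Pi.single μ 1)

section helpers
variable {d0 N : ℕ} {f g : (Fin d0 → ℝ) → ℝ} {x : Fin d0 → ℝ} {μ : Fin d0}

lemma pd_congr_nhds (h : f =ᶠ[nhds x] g) (μ : Fin d0) : pd f μ x = pd g μ x := by
  rw [pd, pd, h.fderiv_eq]

lemma pdV_congr_nhds {F G : (Fin d0 → ℝ) → (Fin N → ℝ)} (h : F =ᶠ[nhds x] G) (μ : Fin d0) :
    pdV F μ x = pdV G μ x := by
  rw [pdV, pdV, h.fderiv_eq]

lemma pd_const_mul (hf : DifferentiableAt ℝ f x) (c : ℝ) :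
    pd (fun y => c * f y) μ x = c * pd f μ x := by
  rw [pd, fderiv_const_mul hf]; simp [pd]

lemma pd_mul (hf : DifferentiableAt ℝ f x) (hg : DifferentiableAt ℝ g x) :
    pd (fun y => f y * g y) μ x = f x * pd g μ x + g x * pd f μ x := by
  rw [pd, (hf.hasFDerivAt.fun_mul hg.hasFDerivAt).fderiv]
  simp [pd]

lemma pd_inv (hf : DifferentiableAt ℝ f x) (hne : f x ≠ 0) :
    pd (fun y => (f y)⁻¹) μ x = -(f x ^ 2)⁻¹ * pd f μ x := by
  rw [pd, show (fun y => (f y)⁻¹) = (fun z : ℝ => z⁻¹) ∘ f from rfl,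
    ((hasFDerivAt_inv hne).comp x hf.hasFDerivAt).fderiv]
  simp [pd]
  ring

lemma pd_log (hf : DifferentiableAt ℝ f x) (hne : f x ≠ 0) :
    pd (fun y => Real.log (f y)) μ x = (f x)⁻¹ * pd f μ x := by
  rw [pd, (hf.hasFDerivAt.log hne).fderiv]
  simp [pd]

lemma pdV_sum_smul {S : Type} [Fintype S] (f : S → (Fin d0 → ℝ) → ℝ)
    (v : S → (Fin N → ℝ)) (hf : ∀ s, DifferentiableAt ℝ (f s) x) (μ : Fin d0) :
    pdV (fun y => ∑ s, f s y • v s) μ x = ∑ s, pd (f s) μ x • v s := by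
  have hd : HasFDerivAt (fun y => ∑ s, f s y • v s)
      (∑ s, ((fderiv ℝ (f s) x).smulRight (v s))) x :=
    HasFDerivAt.fun_sum fun s _ => ((hf s).hasFDerivAt).smul_const (v s)
  rw [pdV, hd.fderiv]
  simp [pd]

end helpers

/-- Proposition 1 on a flat base: the configuration
`σ = Σ_s ε_s ν_s² (ln H_s) u_s`, `Φ^s = ν_s/H_s` built from block-orthogonal brane
vectors satisfying `Σ_{s'} ⟨u_s,u_{s'}⟩ ε_{s'} ν_{s'}² = −1` and harmonic functions
`H_s` coinciding inside blocks satisfies the sigma-model field equations: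
(i) `Σ_μ ∂_μ(e^{−2⟨u_s,σ⟩} ∂_μ Φ^s) = 0`;
(ii) `Σ_μ ∂_μ∂_μ σ + Σ_s ε_s e^{−2⟨u_s,σ⟩} |∇Φ^s|² u_s = 0`;
(iii) `⟨∂_μ σ, ∂_ν σ⟩ + Σ_s ε_s e^{−2⟨u_s,σ⟩} ∂_μ Φ^s ∂_ν Φ^s = 0`. -/
theorem stmt16 (d0 N : ℕ) (hd0 : 1 ≤ d0)
    (Ω : Set (Fin d0 → ℝ)) (hΩ : IsOpen Ω)
    (B : LinearMap.BilinForm ℝ (Fin N → ℝ)) (hBsymm : ∀ x y, B x y = B y x)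
    (S : Type) [Fintype S] [Nonempty S]
    (k : ℕ) (p : S → Fin k) (hp : Function.Surjective p)
    (u : S → (Fin N → ℝ)) (ε : S → ℝ) (hε : ∀ s, ε s = 1 ∨ ε s = -1) (ν : S → ℝ)
    (horth : ∀ s s', p s ≠ p s' → B (u s) (u s') = 0)
    (hrel : ∀ s, ∑ s', B (u s) (u s') * ε s' * (ν s') ^ 2 = -1)
    (H : S → (Fin d0 → ℝ) → ℝ)
    (hHpos : ∀ s, ∀ x ∈ Ω, 0 < H s x)
    (hHC2 : ∀ s, ContDiffOn ℝ 2 (H s) Ω)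
    (hHharm : ∀ s, ∀ x ∈ Ω, ∑ μ, pd (pd (H s) μ) μ x = 0)
    (hHblock : ∀ s s', p s = p s' → H s = H s')
    (σ : (Fin d0 → ℝ) → (Fin N → ℝ))
    (hσ : ∀ x, σ x = ∑ s, (ε s * (ν s) ^ 2 * Real.log (H s x)) • u s)
    (Φ : S → (Fin d0 → ℝ) → ℝ)
    (hΦ : ∀ s x, Φ s x = ν s / H s x) :
    (∀ s, ∀ x ∈ Ω,
      ∑ μ, pd (fun y => Real.exp (-2 * B (u s) (σ y)) * pd (Φ s) μ y) μ x = 0) ∧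
    (∀ x ∈ Ω,
      (∑ μ, pdV (fun y => pdV σ μ y) μ x)
        + ∑ s, (ε s * Real.exp (-2 * B (u s) (σ x))
            * ∑ μ, (pd (Φ s) μ x) ^ 2) • u s = 0) ∧
    (∀ x ∈ Ω, ∀ μ₁ μ₂ : Fin d0,
      B (pdV σ μ₁ x) (pdV σ μ₂ x)
        + ∑ s, ε s * Real.exp (-2 * B (u s) (σ x))
            * pd (Φ s) μ₁ x * pd (Φ s) μ₂ x = 0) := by
  -- basic facts
  have hne : ∀ s, ∀ x ∈ Ω, H s x ≠ 0 := fun s x hx => (hHpos s x hx).ne'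
  have hHdiff : ∀ s, ∀ x ∈ Ω, DifferentiableAt ℝ (H s) x := fun s x hx =>
    ((hHC2 s).contDiffAt (hΩ.mem_nhds hx)).differentiableAt (by norm_num)
  have hpdHdiff : ∀ s μ, ∀ x ∈ Ω, DifferentiableAt ℝ (pd (H s) μ) x := by
    intro s μ x hx
    have h2 : ContDiffAt ℝ 2 (H s) x := (hHC2 s).contDiffAt (hΩ.mem_nhds hx)
    have h1 : ContDiffAt ℝ 1 (fderiv ℝ (H s)) x := h2.fderiv_right (by norm_num)
    exact (h1.differentiableAt one_ne_zero).clm_apply (differentiableAt_const (Pi.single μ 1))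
  -- collapsing sums over a block
  have hcollapse : ∀ (s : S) (F : S → ℝ), (∀ s', p s = p s' → F s' = F s) →
      ∑ s', ε s' * ν s' ^ 2 * F s' * B (u s) (u s') = -F s := by
    intro s F hF
    have h1 : ∀ s' ∈ Finset.univ,
        ε s' * ν s' ^ 2 * F s' * B (u s) (u s')
          = B (u s) (u s') * ε s' * ν s' ^ 2 * F s := by
      intro s' _
      by_cases hps : p s = p s'
      · rw [hF s' hps]; ring
      · rw [horth s s' hps]; ring
    rw [Finset.sum_congr rfl h1, ← Finset.sum_mul, hrel s]; ring
  -- B (u s) (σ x) = - log (H s x)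
  have hBσ : ∀ s x, B (u s) (σ x) = -Real.log (H s x) := by
    intro s x
    rw [hσ, map_sum]
    have h1 : ∀ s' ∈ Finset.univ,
        B (u s) ((ε s' * ν s' ^ 2 * Real.log (H s' x)) • u s')
          = ε s' * ν s' ^ 2 * Real.log (H s' x) * B (u s) (u s') := by
      intro s' _; rw [map_smul, smul_eq_mul]
    rw [Finset.sum_congr rfl h1]
    exact hcollapse s (fun s' => Real.log (H s' x))
      (fun s' hps => by show Real.log (H s' x) = Real.log (H s x); rw [hHblock s' s hps.symm])
  have hexp : ∀ s, ∀ x ∈ Ω, Real.exp (-2 * B (u s) (σ x)) = (H s x) ^ 2 := by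
    intro s x hx
    rw [hBσ, show (-2 : ℝ) * -Real.log (H s x) = Real.log (H s x) + Real.log (H s x) by ring,
      Real.exp_add, Real.exp_log (hHpos s x hx), sq]
  -- pd of Φ
  have hΦpd : ∀ s μ, ∀ x ∈ Ω, pd (Φ s) μ x = -ν s * pd (H s) μ x / (H s x) ^ 2 := by
    intro s μ x hx
    have h1 : Φ s = fun y => ν s * (H s y)⁻¹ := by
      funext y; rw [hΦ, div_eq_mul_inv]
    rw [h1, pd_const_mul ((hHdiff s x hx).fun_inv (hne s x hx)),
      pd_inv (hHdiff s x hx) (hne s x hx)]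
    ring
  -- pd of σ
  have hσpd : ∀ μ, ∀ x ∈ Ω,
      pdV σ μ x = ∑ s, (ε s * ν s ^ 2 * ((H s x)⁻¹ * pd (H s) μ x)) • u s := by
    intro μ x hx
    have h1 : σ = fun y => ∑ s, (fun z => ε s * ν s ^ 2 * Real.log (H s z)) y • u s :=
      funext hσ
    rw [h1, pdV_sum_smul _ _ (fun s => ((hHdiff s x hx).log (hne s x hx)).const_mul _)]
    refine Finset.sum_congr rfl fun s _ => ?_
    rw [pd_const_mul ((hHdiff s x hx).log (hne s x hx)),
      pd_log (hHdiff s x hx) (hne s x hx)]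
  refine ⟨?_, ?_, ?_⟩
  · -- (i)
    intro s x hx
    have key : ∀ μ : Fin d0,
        pd (fun y => Real.exp (-2 * B (u s) (σ y)) * pd (Φ s) μ y) μ x
          = -ν s * pd (pd (H s) μ) μ x := by
      intro μ
      have hev : (fun y => Real.exp (-2 * B (u s) (σ y)) * pd (Φ s) μ y)
          =ᶠ[nhds x] fun y => -ν s * pd (H s) μ y := by
        filter_upwards [hΩ.mem_nhds hx] with y hy
        rw [hexp s y hy, hΦpd s μ y hy]
        have := hne s y hy
        field_simp
      rw [pd_congr_nhds hev μ, pd_const_mul (hpdHdiff s μ x hx)]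
    rw [Finset.sum_congr rfl fun μ _ => key μ, ← Finset.mul_sum, hHharm s x hx, mul_zero]
  · -- (ii)
    intro x hx
    have key : ∀ μ : Fin d0,
        pdV (fun y => pdV σ μ y) μ x
          = ∑ s, (ε s * ν s ^ 2 * ((H s x)⁻¹ * pd (pd (H s) μ) μ x
              + pd (H s) μ x * (-(H s x ^ 2)⁻¹ * pd (H s) μ x))) • u s := by
      intro μ
      have hev : (fun y => pdV σ μ y) =ᶠ[nhds x]
          fun y => ∑ s, (fun z => ε s * ν s ^ 2 * ((H s z)⁻¹ * pd (H s) μ z)) y • u s := by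
        filter_upwards [hΩ.mem_nhds hx] with y hy
        exact hσpd μ y hy
      rw [pdV_congr_nhds hev μ, pdV_sum_smul _ _ (fun s =>
        (((hHdiff s x hx).fun_inv (hne s x hx)).fun_mul (hpdHdiff s μ x hx)).const_mul _)]
      refine Finset.sum_congr rfl fun s _ => ?_
      rw [pd_const_mul (((hHdiff s x hx).fun_inv (hne s x hx)).fun_mul (hpdHdiff s μ x hx)),
        pd_mul ((hHdiff s x hx).fun_inv (hne s x hx)) (hpdHdiff s μ x hx),
        pd_inv (hHdiff s x hx) (hne s x hx)]
    rw [Finset.sum_congr rfl fun μ _ => key μ, Finset.sum_comm, ← Finset.sum_add_distrib]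
    rw [show (0 : Fin N → ℝ) = ∑ s : S, (0 : ℝ) • u s by simp]
    refine Finset.sum_congr rfl fun s _ => ?_
    rw [← Finset.sum_smul, ← add_smul]
    congr 1
    rw [hexp s x hx]
    have h2 := hHharm s x hx
    have hne' := hne s x hx
    have e1 : ∑ μ, ε s * ν s ^ 2 * ((H s x)⁻¹ * pd (pd (H s) μ) μ x
        + pd (H s) μ x * (-(H s x ^ 2)⁻¹ * pd (H s) μ x))
        = ε s * ν s ^ 2 * (H s x)⁻¹ * (∑ μ, pd (pd (H s) μ) μ x)
          + ε s * ν s ^ 2 * (-(H s x ^ 2)⁻¹) * ∑ μ, (pd (H s) μ x) ^ 2 := by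
      rw [Finset.mul_sum, Finset.mul_sum, ← Finset.sum_add_distrib]
      exact Finset.sum_congr rfl fun μ _ => by ring
    have e2 : ∑ μ, (pd (Φ s) μ x) ^ 2
        = ν s ^ 2 / (H s x) ^ 4 * ∑ μ, (pd (H s) μ x) ^ 2 := by
      rw [Finset.mul_sum]
      refine Finset.sum_congr rfl fun μ _ => ?_
      rw [hΦpd s μ x hx]
      ring
    rw [e1, e2, h2]
    field_simp
    ring
  · -- (iii)
    intro x hx μ₁ μ₂
    rw [hσpd μ₁ x hx, hσpd μ₂ x hx]
    simp only [map_sum, map_smul, LinearMap.sum_apply, LinearMap.smul_apply, smul_eq_mul]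
    have inner : ∀ s : S,
        ∑ s', ε s' * ν s' ^ 2 * ((H s' x)⁻¹ * pd (H s') μ₁ x) * B (u s') (u s)
          = -((H s x)⁻¹ * pd (H s) μ₁ x) := by
      intro s
      have hF : ∀ s', p s = p s' →
          (fun s' => (H s' x)⁻¹ * pd (H s') μ₁ x) s'
            = (fun s' => (H s' x)⁻¹ * pd (H s') μ₁ x) s := by
        intro s' hps
        show (H s' x)⁻¹ * pd (H s') μ₁ x = (H s x)⁻¹ * pd (H s) μ₁ x
        rw [hHblock s' s hps.symm]
      have h0 := hcollapse s (fun s' => (H s' x)⁻¹ * pd (H s') μ₁ x) hF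
      rw [← h0]
      exact Finset.sum_congr rfl fun s' _ => by rw [hBsymm]
    have hfirst : ∑ s, ε s * ν s ^ 2 * ((H s x)⁻¹ * pd (H s) μ₂ x)
          * (∑ s', ε s' * ν s' ^ 2 * ((H s' x)⁻¹ * pd (H s') μ₁ x) * B (u s') (u s))
        = ∑ s, ε s * ν s ^ 2 * ((H s x)⁻¹ * pd (H s) μ₂ x)
          * -((H s x)⁻¹ * pd (H s) μ₁ x) :=
      Finset.sum_congr rfl fun s _ => by rw [inner s]
    have hsecond : ∑ s, ε s * Real.exp (-2 * B (u s) (σ x)) * pd (Φ s) μ₁ x * pd (Φ s) μ₂ x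
        = ∑ s, ε s * (H s x) ^ 2 * (-ν s * pd (H s) μ₁ x / (H s x) ^ 2)
          * (-ν s * pd (H s) μ₂ x / (H s x) ^ 2) :=
      Finset.sum_congr rfl fun s _ => by
        rw [hexp s x hx, hΦpd s μ₁ x hx, hΦpd s μ₂ x hx]
    rw [hfirst, hsecond, ← Finset.sum_add_distrib]
    apply Finset.sum_eq_zero
    intro s _
    have hne' := hne s x hx
    field_simp
    ring
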